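/- Let F be a finite field of characteristic p, G a finite group, and s ∈ FG the sum of all p-elements of G (including the identity). Then the Jacobson radical J(FG) is contained in the two-sided annihilator Ann_{FG}(s) = {α ∈ FG : αs = sα = 0}. -/

import Mathlib

set_option linter.unusedSectionVars false
open scoped Classical
namespace JacAnn


variable {G : Type*} [Group G] {F : Type*} [Field F]

def wprod {m : ℕ} (w : Fin m → G) : G := (List.ofFn w).prod

theorem wprod_cons {m : ℕ} (g : G) (w : Fin m → G) :
    wprod ((Fin.cons g w : Fin _ → G)) = g * wprod w := by
  simp only [wprod, List.ofFn_succ, Fin.cons_zero, Fin.cons_succ, List.prod_cons]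

theorem finsupp_decomp [Fintype G] (β : MonoidAlgebra F G) :
    β = ∑ g : G, MonoidAlgebra.single g (β.coeff g) := by
  ext x
  rw [MonoidAlgebra.coeff_sum, Finset.sum_apply']
  simp [Finsupp.single_apply]

theorem pow_expand [Fintype G] (β : MonoidAlgebra F G) (m : ℕ) :
    β ^ m = ∑ w : Fin m → G, (∏ i, β.coeff (w i)) • MonoidAlgebra.single (wprod w) (1 : F) := by
  induction m with
  | zero =>
    simp only [pow_zero]
    rw [Fintype.sum_subsingleton _ (fun i : Fin 0 => (1 : G))]
    simp [wprod, MonoidAlgebra.one_def]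
  | succ m ih =>
    have key : ∀ (g : G) (w : Fin m → G),
        MonoidAlgebra.single g (β.coeff g) * ((∏ i, β.coeff (w i)) • MonoidAlgebra.single (wprod w) (1 : F))
          = (∏ i, β.coeff ((Fin.cons g w : Fin _ → G) i)) • MonoidAlgebra.single (wprod ((Fin.cons g w : Fin _ → G))) (1 : F) := by
      intro g w
      rw [mul_smul_comm, MonoidAlgebra.single_mul_single, mul_one, wprod_cons,
        Fin.prod_univ_succ]
      rw [Fin.cons_zero]
      simp only [Fin.cons_succ]
      rw [MonoidAlgebra.smul_single, smul_eq_mul, MonoidAlgebra.smul_single, smul_eq_mul, mul_one, mul_comm]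
    calc β ^ (m+1) = β * β ^ m := by rw [pow_succ']
    _ = (∑ g : G, MonoidAlgebra.single g (β.coeff g)) *
          ∑ w : Fin m → G, (∏ i, β.coeff (w i)) • MonoidAlgebra.single (wprod w) (1 : F) := by
        rw [← finsupp_decomp, ← ih]
    _ = ∑ g : G, ∑ w : Fin m → G,
          (∏ i, β.coeff ((Fin.cons g w : Fin _ → G) i)) • MonoidAlgebra.single (wprod ((Fin.cons g w : Fin _ → G))) (1 : F) := by
        rw [Finset.sum_mul]
        exact Finset.sum_congr rfl fun g _ => by
          rw [Finset.mul_sum]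
          exact Finset.sum_congr rfl fun w _ => key g w
    _ = ∑ w : Fin (m+1) → G, (∏ i, β.coeff (w i)) • MonoidAlgebra.single (wprod w) (1 : F) := by
        rw [← (Fin.consEquiv (fun _ : Fin (m+1) => G)).sum_comp
          (fun w : Fin (m+1) → G => (∏ i, β.coeff (w i)) • MonoidAlgebra.single (wprod w) (1 : F))]
        rw [Fintype.sum_prod_type]
        simp [Fin.consEquiv]






def rot {m : ℕ} [NeZero m] (k : Fin m) (w : Fin m → G) : Fin m → G := fun i => w (i + k)

theorem rot_zero {m : ℕ} [NeZero m] (w : Fin m → G) : rot 0 w = w := by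
  funext i; simp [rot]

theorem rot_rot {m : ℕ} [NeZero m] (k j : Fin m) (w : Fin m → G) :
    rot k (rot j w) = rot (k + j) w := by
  funext i; simp [rot, add_assoc]

theorem prod_rot {F : Type*} [CommMonoid F] {m : ℕ} [NeZero m] (k : Fin m) (w : Fin m → G)
    (f : G → F) : ∏ i, f (rot k w i) = ∏ i, f (w i) :=
  Fintype.prod_equiv (Equiv.addRight k) _ _ (fun _ => rfl)

theorem wprod_rot_one {n : ℕ} (w : Fin (n+1) → G) :
    wprod (rot 1 w) = (w 0)⁻¹ * wprod w * w 0 := by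
  have h1 : List.ofFn (rot 1 w) = (List.ofFn fun i : Fin n => w i.succ).concat (w 0) := by
    rw [List.ofFn_succ']
    congr 1
    · refine congrArg _ (funext fun i => ?_)
      show w (i.castSucc + 1) = w i.succ
      congr 1
      ext
      simp [Fin.val_add_one_of_lt (Fin.castSucc_lt_last i)]
    · show w (Fin.last n + 1) = w 0
      rw [Fin.last_add_one]
  have h2 : wprod w = w 0 * (List.ofFn fun i : Fin n => w i.succ).prod := by
    rw [wprod, List.ofFn_succ, List.prod_cons]
  rw [wprod, h1, List.prod_concat, h2]
  group

open Fin.NatCast in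
theorem wprod_rot_natCast {n : ℕ} (k : ℕ) (w : Fin (n+1) → G) :
    ∃ x : G, wprod (rot (k : Fin (n+1)) w) = x⁻¹ * wprod w * x := by
  induction k with
  | zero => exact ⟨1, by rw [Nat.cast_zero, rot_zero]; group⟩
  | succ k ih =>
    obtain ⟨x, hx⟩ := ih
    refine ⟨x * (rot (k : Fin (n+1)) w) 0, ?_⟩
    have hcast : ((k+1 : ℕ) : Fin (n+1)) = 1 + (k : Fin (n+1)) := by
      rw [Nat.cast_add, Nat.cast_one, add_comm 1 (k : Fin (n+1))]
    have : rot ((k+1 : ℕ) : Fin (n+1)) w = rot 1 (rot (k : Fin (n+1)) w) := by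
      rw [rot_rot, hcast]
    rw [this, wprod_rot_one, hx]
    group

open Fin.NatCast in
theorem wprod_rot_conj {m : ℕ} [NeZero m] (k : Fin m) (w : Fin m → G) :
    ∃ x : G, wprod (rot k w) = x⁻¹ * wprod w * x := by
  obtain ⟨n, rfl⟩ := Nat.exists_eq_succ_of_ne_zero (NeZero.ne m)
  have := wprod_rot_natCast (G := G) k.val w
  rwa [Fin.cast_val_eq_self] at this




theorem const_of_rot_fixed {m : ℕ} [NeZero m] (hm : m.Prime) (d : Fin m) (hd : d ≠ 0)
    (w : Fin m → G) (h : ∀ i, w (i + d) = w i) : ∀ i, w i = w 0 := by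
  haveI : Fact (Nat.card (Fin m)).Prime := ⟨by simpa using hm⟩
  set H : AddSubgroup (Fin m) :=
    { carrier := {e | ∀ i, w (i + e) = w i}
      zero_mem' := by intro i; simp
      add_mem' := by
        intro a b ha hb i
        rw [← add_assoc, hb, ha]
      neg_mem' := by
        intro a ha i
        have := ha (i + -a)
        rw [add_assoc, neg_add_cancel, add_zero] at this
        exact this.symm } with hH
  have hdH : d ∈ H := h
  have : H = ⊤ := by
    rcases H.eq_bot_or_eq_top_of_prime_card with h1 | h2
    · exact absurd (h1 ▸ hdH) (by simpa using hd)
    · exact h2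
  intro i
  have hiH : i ∈ H := this ▸ AddSubgroup.mem_top i
  have := hiH 0
  rwa [zero_add] at this








theorem wprod_const {m : ℕ} (g : G) : wprod (fun _ : Fin m => g) = g ^ m := by
  rw [wprod, List.ofFn_const, List.prod_replicate]

theorem rot_const {m : ℕ} [NeZero m] (k : Fin m) (v : Fin m → G)
    (hv : ∀ i, v i = v 0) : ∀ i, rot k v i = rot k v 0 := by
  intro i; show v (i + k) = v (0 + k); rw [hv (i+k), hv (0+k)]






theorem filter_sum_pow [Fintype G] (β : MonoidAlgebra F G) (m : ℕ) (q : G → Prop)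
    (hexp : β ^ m = ∑ w : Fin m → G, (∏ i, β.coeff (w i)) • MonoidAlgebra.single (wprod w) (1 : F)) :
    ∑ g ∈ Finset.univ.filter q, (β ^ m).coeff g
      = ∑ w ∈ Finset.univ.filter (fun w : Fin m → G => q (wprod w)), ∏ i, β.coeff (w i) := by
  rw [hexp]
  have : ∀ g : G,
      (∑ w : Fin m → G, (∏ i, β.coeff (w i)) • MonoidAlgebra.single (wprod w) (1 : F)).coeff g
        = ∑ w : Fin m → G, (∏ i, β.coeff (w i)) * (if wprod w = g then 1 else 0) := by
    intro g
    rw [MonoidAlgebra.coeff_sum, Finset.sum_apply']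
    refine Finset.sum_congr rfl fun w _ => ?_
    rw [MonoidAlgebra.coeff_smul_apply, MonoidAlgebra.coeff_single, Finsupp.single_apply, smul_eq_mul]
  simp only [this]
  rw [Finset.sum_comm, Finset.sum_filter]
  refine Finset.sum_congr rfl fun w _ => ?_
  simp only [mul_ite, mul_one, mul_zero]
  by_cases h : q (wprod w)
  · rw [if_pos h, Finset.sum_ite_eq (Finset.univ.filter q) (wprod w) (fun _ => ∏ i, β.coeff (w i))]
    rw [if_pos (Finset.mem_filter.2 ⟨Finset.mem_univ _, h⟩)]
  · rw [if_neg h, Finset.sum_ite_eq (Finset.univ.filter q) (wprod w) (fun _ => ∏ i, β.coeff (w i))]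
    rw [if_neg (by simp [h])]


theorem key [Fintype G] (p : ℕ) [hp : Fact p.Prime] [CharP F p]
    (q : G → Prop) (hq : ∀ (x g : G), q g → q (x⁻¹ * g * x)) (β : MonoidAlgebra F G) :
    ∑ g ∈ Finset.univ.filter q, (β ^ p).coeff g
      = (∑ g ∈ Finset.univ.filter (fun g : G => q (g ^ p)), β.coeff g) ^ p := by
  haveI : NeZero p := ⟨hp.out.ne_zero⟩
  rw [filter_sum_pow β p q (pow_expand β p), sum_pow_char]
  rw [← Finset.sum_filter_add_sum_filter_not
    (Finset.univ.filter fun w : Fin p → G => q (wprod w)) (fun w => ∀ i, w i = w 0)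
    (fun w => ∏ i, β.coeff (w i))]
  have hconst : ∑ w ∈ (Finset.univ.filter fun w : Fin p → G => q (wprod w)).filter
      (fun w => ∀ i, w i = w 0), (∏ i, β.coeff (w i))
      = ∑ g ∈ Finset.univ.filter (fun g : G => q (g ^ p)), (β.coeff g) ^ p := by
    refine Finset.sum_nbij' (fun w => w 0) (fun g => fun _ => g) ?_ ?_ ?_ ?_ ?_
    · intro w hw
      simp only [Finset.mem_filter, Finset.mem_univ, true_and] at hw ⊢
      obtain ⟨hqw, hc⟩ := hw
      have : w = fun _ => w 0 := funext fun i => hc i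
      rwa [this, wprod_const] at hqw
    · intro g hg
      simp only [Finset.mem_filter, Finset.mem_univ, true_and] at hg ⊢
      exact ⟨by rwa [wprod_const], fun i => trivial⟩
    · intro w hw
      simp only [Finset.mem_filter, Finset.mem_univ, true_and] at hw
      exact funext fun i => (hw.2 i).symm
    · intro g hg; trivial
    · intro w hw
      simp only [Finset.mem_filter, Finset.mem_univ, true_and] at hw
      calc ∏ i, β.coeff (w i) = ∏ _i : Fin p, β.coeff (w 0) :=
            Finset.prod_congr rfl fun i _ => by rw [hw.2 i]
      _ = (β.coeff (w 0)) ^ p := by rw [Finset.prod_const, Finset.card_univ, Fintype.card_fin]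
  have hnc : ∑ w ∈ (Finset.univ.filter fun w : Fin p → G => q (wprod w)).filter
      (fun w => ¬ ∀ i, w i = w 0), (∏ i, β.coeff (w i)) = 0 := by
    set N := (Finset.univ.filter fun w : Fin p → G => q (wprod w)).filter
      (fun w => ¬ ∀ i, w i = w 0) with hN
    have hNrot : ∀ (k : Fin p) (w : Fin p → G), w ∈ N → rot k w ∈ N := by
      intro k w hw
      simp only [hN, Finset.mem_filter, Finset.mem_univ, true_and] at hw ⊢
      obtain ⟨hqw, hncw⟩ := hw
      constructor
      · obtain ⟨x, hx⟩ := wprod_rot_conj k w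
        rw [hx]; exact hq x _ hqw
      · intro hcon
        apply hncw
        have : w = rot (-k) (rot k w) := by
          rw [rot_rot, neg_add_cancel, rot_zero]
        rw [this]
        exact rot_const _ _ hcon
    let R : Setoid (Fin p → G) :=
      ⟨fun w v => ∃ k : Fin p, v = rot k w, by
        refine ⟨fun w => ⟨0, (rot_zero w).symm⟩, ?_, ?_⟩
        · rintro w v ⟨k, rfl⟩
          exact ⟨-k, by rw [rot_rot, neg_add_cancel, rot_zero]⟩
        · rintro u v w ⟨k, rfl⟩ ⟨j, rfl⟩
          exact ⟨j + k, by rw [rot_rot]⟩⟩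
    rw [Finset.sum_partition R]
    refine Finset.sum_eq_zero fun c hc => ?_
    obtain ⟨w, hwN, hwc⟩ := Finset.mem_image.1 hc
    have hfiber : N.filter (fun v => Quotient.mk'' v = c)
        = Finset.image (fun k : Fin p => rot k w) Finset.univ := by
      ext v
      simp only [Finset.mem_filter, Finset.mem_image, Finset.mem_univ, true_and]
      constructor
      · rintro ⟨hvN, hvc⟩
        rw [← hwc] at hvc
        have : R.r v w := Quotient.eq''.1 hvc
        obtain ⟨k, hk⟩ := this
        exact ⟨-k, by rw [hk, rot_rot, neg_add_cancel, rot_zero]⟩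
      · rintro ⟨k, rfl⟩
        refine ⟨hNrot k w hwN, ?_⟩
        rw [← hwc]
        exact Quotient.sound' (R.iseqv.symm ⟨k, rfl⟩)
    rw [hfiber, Finset.sum_image ?inj]
    case inj =>
      intro k _ k' _ hkk'
      by_contra hne
      have hd : k - k' ≠ 0 := sub_ne_zero.2 hne
      have hfix : ∀ i, w (i + (k - k')) = w i := by
        intro i
        have h1 : ∀ j, w (j + k) = w (j + k') := fun j => congrFun hkk' j
        have := h1 (i - k')
        rw [sub_add_cancel] at this
        rw [show i + (k - k') = i - k' + k by abel, this]
      have hconst := const_of_rot_fixed hp.out _ hd w hfix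
      simp only [hN, Finset.mem_filter] at hwN
      exact hwN.2 hconst
    have : ∀ k : Fin p, (∏ i, β.coeff (rot k w i)) = ∏ i, β.coeff (w i) := fun k => prod_rot k w β.coeff
    rw [Finset.sum_congr rfl fun k _ => this k, Finset.sum_const, Finset.card_univ,
      Fintype.card_fin, nsmul_eq_mul, CharP.cast_eq_zero F p, zero_mul]
  rw [hconst, hnc, add_zero]


theorem phi_pow [Fintype G] (p : ℕ) [hp : Fact p.Prime] [CharP F p] (n : ℕ)
    (β : MonoidAlgebra F G) :
    ∑ g ∈ Finset.univ.filter (fun g : G => g ^ p ^ (0:ℕ) = 1), (β ^ p ^ n).coeff g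
      = (∑ g ∈ Finset.univ.filter (fun g : G => g ^ p ^ n = 1), β.coeff g) ^ p ^ n := by
  induction n generalizing β with
  | zero => simp only [pow_zero, pow_one]
  | succ n ih =>
    have hβ : β ^ p ^ (n+1) = (β ^ p) ^ p ^ n := by
      rw [← pow_mul, ← pow_succ']
    rw [hβ, ih (β ^ p)]
    have hq : ∀ (x g : G), g ^ p ^ n = 1 → (x⁻¹ * g * x) ^ p ^ n = 1 := by
      intro x g hg
      have : (x⁻¹ * g * x) ^ p ^ n = x⁻¹ * g ^ p ^ n * x := by
        simpa [inv_inv] using conj_pow (i := p ^ n) (a := x⁻¹) (b := g)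
      rw [this, hg, mul_one, inv_mul_cancel]
    rw [key p (fun g : G => g ^ p ^ n = 1) hq β]
    have : Finset.univ.filter (fun g : G => (g ^ p) ^ p ^ n = 1)
        = Finset.univ.filter (fun g : G => g ^ p ^ (n+1) = 1) := by
      refine Finset.filter_congr fun g _ => ?_
      rw [← pow_mul, ← pow_succ']
    rw [this, ← pow_mul, ← pow_succ']

theorem exists_pow_eq_zero {R : Type*} [Ring R] [Finite R] {α : R}
    (hα : α ∈ (⊥ : Ideal R).jacobson) : ∃ i, α ^ i = 0 := by
  have hinv : ∀ x ∈ (⊥ : Ideal R).jacobson, ∃ u : R, u * (1 - x) = 1 := by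
    intro x hx
    by_cases h : Ideal.span {1 - x} = ⊤
    · have h1 : (1 : R) ∈ Ideal.span {1 - x} := h ▸ Submodule.mem_top
      rw [Ideal.span, Submodule.mem_span_singleton] at h1
      obtain ⟨u, hu⟩ := h1
      exact ⟨u, by rwa [smul_eq_mul] at hu⟩
    · exfalso
      obtain ⟨M, hM, hle⟩ := Ideal.exists_le_maximal _ h
      have hxM : x ∈ M := by
        have hJ : (⊥ : Ideal R).jacobson ≤ M := sInf_le ⟨bot_le, hM⟩
        exact hJ hx
      have h2 : (1 - x) ∈ M := hle (Ideal.subset_span rfl)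
      have h1M : (1 : R) ∈ M := by
        have := M.add_mem h2 hxM
        simpa using this
      exact hM.ne_top (M.eq_top_iff_one.2 h1M)
  have main : ∀ a b : ℕ, a < b → α ^ a = α ^ b → ∃ i, α ^ i = 0 := by
    intro a b hab he
    obtain ⟨e, rfl⟩ : ∃ e, b = (e + 1) + a := ⟨b - a - 1, by omega⟩
    have hd : α ^ (e+1) ∈ (⊥ : Ideal R).jacobson := by
      rw [pow_succ]
      exact Ideal.mul_mem_left _ _ hα
    obtain ⟨u, hu⟩ := hinv _ hd
    refine ⟨a, ?_⟩
    have h0 : (1 - α ^ (e+1)) * α ^ a = 0 := by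
      rw [sub_mul, one_mul, ← pow_add, ← he, sub_self]
    calc α ^ a = (u * (1 - α ^ (e+1))) * α ^ a := by rw [hu, one_mul]
    _ = u * ((1 - α ^ (e+1)) * α ^ a) := by rw [mul_assoc]
    _ = 0 := by rw [h0, mul_zero]
  obtain ⟨a, b, hab, he⟩ := Finite.exists_ne_map_eq_of_infinite (fun n : ℕ => α ^ n)
  rcases hab.lt_or_gt with h | h
  · exact main a b h he
  · exact main b a h he.symm

theorem lam_zero [Fintype G] [Fintype F] (p : ℕ) [hp : Fact p.Prime] [CharP F p]
    (α : MonoidAlgebra F G) (hα : α ∈ (⊥ : Ideal (MonoidAlgebra F G)).jacobson) :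
    ∑ g ∈ Finset.univ.filter (fun g : G => ∃ n : ℕ, orderOf g = p ^ n), α.coeff g = 0 := by
  haveI hfin : Finite (G →₀ F) :=
    Finite.of_injective (fun (f : G →₀ F) => (f : G → F)) DFunLike.coe_injective
  haveI : Finite (MonoidAlgebra F G) := Finite.of_injective MonoidAlgebra.coeff MonoidAlgebra.coeff_injective
  obtain ⟨i, hi⟩ := exists_pow_eq_zero hα
  set N := max i (Fintype.card G) with hNdef
  have hfilter : Finset.univ.filter (fun g : G => g ^ p ^ N = 1)
      = Finset.univ.filter (fun g : G => ∃ n : ℕ, orderOf g = p ^ n) := by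
    refine Finset.filter_congr fun g _ => ?_
    constructor
    · intro h
      have hd : orderOf g ∣ p ^ N := orderOf_dvd_of_pow_eq_one h
      obtain ⟨j, _, hj⟩ := (Nat.dvd_prime_pow hp.out).1 hd
      exact ⟨j, hj⟩
    · rintro ⟨j, hj⟩
      have h1 : j < p ^ j := Nat.lt_pow_self (n := j) hp.out.one_lt
      have h2 : p ^ j ≤ Fintype.card G := hj ▸ orderOf_le_card_univ
      have hjN : j ≤ N := le_trans (le_of_lt (lt_of_lt_of_le h1 h2)) (le_max_right _ _)
      refine orderOf_dvd_iff_pow_eq_one.1 ?_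
      rw [hj]
      exact pow_dvd_pow p hjN
  have hz : α ^ p ^ N = 0 := by
    have hiN : i ≤ p ^ N := by
      calc i ≤ N := le_max_left _ _
      _ ≤ p ^ N := le_of_lt (Nat.lt_pow_self (n := N) hp.out.one_lt)
    obtain ⟨d, hd⟩ : ∃ d, p ^ N = i + d := ⟨p ^ N - i, by omega⟩
    rw [hd, pow_add, hi, zero_mul]
  have hphi := phi_pow p N α
  rw [hz] at hphi
  have hL : ∑ g ∈ Finset.univ.filter (fun g : G => g ^ p ^ (0:ℕ) = 1),
      ((0 : MonoidAlgebra F G)).coeff g = 0 := by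
    simp
  rw [hL] at hphi
  have := (pow_eq_zero_iff (n := p ^ N) (pow_ne_zero N hp.out.ne_zero)).1 hphi.symm
  rwa [hfilter] at this

theorem s_central [Fintype G] (p : ℕ) (β : MonoidAlgebra F G) :
    (∑ g ∈ Finset.univ.filter (fun g : G => ∃ n : ℕ, orderOf g = p ^ n),
        MonoidAlgebra.of F G g) * β
      = β * ∑ g ∈ Finset.univ.filter (fun g : G => ∃ n : ℕ, orderOf g = p ^ n),
          MonoidAlgebra.of F G g := by
  set S := Finset.univ.filter (fun g : G => ∃ n : ℕ, orderOf g = p ^ n) with hS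
  have horder : ∀ x g : G, orderOf (x * g * x⁻¹) = orderOf g := by
    intro x g
    have := orderOf_injective (MulAut.conj x).toMonoidHom (MulEquiv.injective _) g
    simpa using this
  have hof : ∀ x : G, (∑ g ∈ S, MonoidAlgebra.of F G g) * MonoidAlgebra.of F G x
      = MonoidAlgebra.of F G x * ∑ g ∈ S, MonoidAlgebra.of F G g := by
    intro x
    rw [Finset.sum_mul, Finset.mul_sum]
    simp only [← map_mul]
    refine Finset.sum_nbij' (fun g => x⁻¹ * g * x) (fun g => x * g * x⁻¹) ?_ ?_ ?_ ?_ ?_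
    · intro g hg
      simp only [hS, Finset.mem_filter, Finset.mem_univ, true_and] at hg ⊢
      have : orderOf (x⁻¹ * g * x) = orderOf g := by
        have := horder x⁻¹ g
        rwa [inv_inv] at this
      rwa [this]
    · intro g hg
      simp only [hS, Finset.mem_filter, Finset.mem_univ, true_and] at hg ⊢
      rwa [horder]
    · intro g _; group
    · intro g _; group
    · intro g _
      refine congrArg _ ?_
      group
  calc (∑ g ∈ S, MonoidAlgebra.of F G g) * β
      = (∑ g ∈ S, MonoidAlgebra.of F G g) * ∑ x : G, MonoidAlgebra.single x (β.coeff x) := by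
        rw [← finsupp_decomp]
  _ = ∑ x : G, (∑ g ∈ S, MonoidAlgebra.of F G g) * MonoidAlgebra.single x (β.coeff x) := by
        rw [Finset.mul_sum]
  _ = ∑ x : G, MonoidAlgebra.single x (β.coeff x) * ∑ g ∈ S, MonoidAlgebra.of F G g := by
        refine Finset.sum_congr rfl fun x _ => ?_
        have hsingle : MonoidAlgebra.single x (β.coeff x) = β.coeff x • MonoidAlgebra.of F G x := by
          rw [MonoidAlgebra.of_apply, MonoidAlgebra.smul_single, smul_eq_mul, mul_one]
        rw [hsingle, mul_smul_comm, smul_mul_assoc, hof]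
  _ = (∑ x : G, MonoidAlgebra.single x (β.coeff x)) * ∑ g ∈ S, MonoidAlgebra.of F G g := by
        rw [Finset.sum_mul]
  _ = β * ∑ g ∈ S, MonoidAlgebra.of F G g := by rw [← finsupp_decomp]

end JacAnn

theorem jacobson_subset_ann (F : Type*) [Field F] [Fintype F] (p : ℕ) [Fact p.Prime]
    [CharP F p] (G : Type*) [Group G] [Fintype G] :
    ∀ α ∈ (⊥ : Ideal (MonoidAlgebra F G)).jacobson,
      α * (∑ g ∈ Finset.univ.filter (fun g : G => ∃ n : ℕ, orderOf g = p ^ n),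
            MonoidAlgebra.of F G g) = 0 ∧
      (∑ g ∈ Finset.univ.filter (fun g : G => ∃ n : ℕ, orderOf g = p ^ n),
            MonoidAlgebra.of F G g) * α = 0 := by
  intro α hα
  have h1 : α * (∑ g ∈ Finset.univ.filter (fun g : G => ∃ n : ℕ, orderOf g = p ^ n),
      MonoidAlgebra.of F G g) = 0 := by
    ext x
    rw [Finset.mul_sum, MonoidAlgebra.coeff_sum, Finset.sum_apply', MonoidAlgebra.coeff_zero, Finsupp.zero_apply]
    have step1 : ∀ g : G, (α * MonoidAlgebra.of F G g).coeff x = α.coeff (x * g⁻¹) := by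
      intro g
      rw [MonoidAlgebra.of_apply, MonoidAlgebra.coeff_mul_single_apply, mul_one]
    rw [Finset.sum_congr rfl fun g _ => step1 g]
    have hinvmem : ∀ g : G, g ∈ Finset.univ.filter (fun g : G => ∃ n : ℕ, orderOf g = p ^ n)
        → g⁻¹ ∈ Finset.univ.filter (fun g : G => ∃ n : ℕ, orderOf g = p ^ n) := by
      intro g hg
      simp only [Finset.mem_filter, Finset.mem_univ, true_and, orderOf_inv] at hg ⊢
      exact hg
    have hreindex : ∑ g ∈ Finset.univ.filter (fun g : G => ∃ n : ℕ, orderOf g = p ^ n),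
        α.coeff (x * g⁻¹) = ∑ g ∈ Finset.univ.filter (fun g : G => ∃ n : ℕ, orderOf g = p ^ n),
        α.coeff (x * g) :=
      Finset.sum_nbij' (fun g => g⁻¹) (fun g => g⁻¹) hinvmem hinvmem
        (fun g _ => inv_inv g) (fun g _ => inv_inv g) (fun g _ => rfl)
    rw [hreindex]
    have step2 : ∀ g : G, α.coeff (x * g) = (MonoidAlgebra.single x⁻¹ (1:F) * α).coeff g := by
      intro g
      rw [MonoidAlgebra.coeff_single_mul_apply, one_mul, inv_inv]
    rw [Finset.sum_congr rfl fun g _ => step2 g]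
    exact JacAnn.lam_zero p _ (Ideal.mul_mem_left _ _ hα)
  exact ⟨h1, by rw [JacAnn.s_central p α]; exact h1⟩
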